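/- If {t_n} ⊂ [0,1] satisfies ∑ t_n² < ∞, then there exist a real Hilbert space H, a countable family of closed linear subspaces with trivial intersection {0}, a starting point x₀, and a realization of remote projections with parameters {t_n} whose iterates x_n satisfy liminf |x_n| > 0; in particular, 0 is not a weak cluster point of {x_n}. -/

import Mathlib

open Filter ENNReal
noncomputable section
namespace Stmt14

abbrev Hsp : Type := lp (fun _ : ℕ => ℝ) 2

def a (t : ℕ → ℝ) : ℕ → ℝ := fun k => match k with | 0 => 1 | m+1 => t m

def c (t : ℕ → ℝ) (n k : ℕ) : ℝ := if 1 ≤ k ∧ k ≤ n then 0 else a t k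

lemma memtwo {f : ℕ → ℝ} (hf : Summable (fun k => f k ^ 2)) : Memℓp f 2 := by
  apply memℓp_gen
  have : (fun k => ‖f k‖ ^ ((2:ℝ≥0∞)).toReal) = fun k => f k ^ 2 := by
    funext k
    rw [Real.norm_eq_abs, show ((2:ℝ≥0∞)).toReal = ((2:ℕ):ℝ) by norm_num,
      Real.rpow_natCast, sq_abs]
  rw [this]; exact hf

variable {t : ℕ → ℝ}

lemma ha_sum (hsum : Summable (fun n => t n ^ 2)) : Summable (fun k => a t k ^ 2) :=
  (summable_nat_add_iff 1).mp hsum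

lemma ha_abs (ht : ∀ n, t n ∈ Set.Icc (0:ℝ) 1) (k : ℕ) : |a t k| ≤ 1 := by
  match k with
  | 0 => simp [a]
  | m+1 =>
    have := ht m
    rw [abs_le]
    constructor <;> simp only [a] <;> [linarith [this.1]; exact this.2]

lemma hc_sum (hsum : Summable (fun n => t n ^ 2)) (n : ℕ) :
    Summable (fun k => c t n k ^ 2) := by
  refine Summable.of_nonneg_of_le (fun k => sq_nonneg _) (fun k => ?_) (ha_sum hsum)
  unfold c; split_ifs
  · simpa using sq_nonneg (a t k)
  · exact le_refl _

/-- the coordinate evaluation is continuous -/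
lemma cont_eval (k : ℕ) : Continuous fun f : Hsp => (f : ∀ _ : ℕ, ℝ) k := by
  refine LipschitzWith.continuous (K := 1) (LipschitzWith.of_dist_le_mul fun f g => ?_)
  simp only [NNReal.coe_one, one_mul]
  rw [dist_eq_norm, dist_eq_norm f g]
  have h1 : (f : ∀ _ : ℕ, ℝ) k - g k = (f - g) k := by rw [lp.coeFn_sub]; rfl
  rw [h1]
  exact lp.norm_apply_le_norm (by norm_num) (f - g) k

/-- the subspaces -/
def C (k : ℕ) : Submodule ℝ Hsp where
  carrier := {f : Hsp | (f : ∀ _ : ℕ, ℝ) k = 0}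
  add_mem' := by
    intro f g hf hg
    simp only [Set.mem_setOf_eq] at *
    rw [lp.coeFn_add, Pi.add_apply, hf, hg, add_zero]
  zero_mem' := by simp only [Set.mem_setOf_eq, lp.coeFn_zero, Pi.zero_apply]
  smul_mem' := by
    intro r f hf
    simp only [Set.mem_setOf_eq] at *
    rw [lp.coeFn_smul, Pi.smul_apply, hf, smul_zero]

lemma mem_C {k : ℕ} {f : Hsp} : f ∈ C k ↔ (f : ∀ _ : ℕ, ℝ) k = 0 := Iff.rfl

lemma C_closed (k : ℕ) : IsClosed ((C k : Set Hsp)) := by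
  have : (C k : Set Hsp) = (fun f : Hsp => (f : ∀ _ : ℕ, ℝ) k) ⁻¹' {0} := by
    ext f; simp [mem_C]
  rw [this]
  exact isClosed_singleton.preimage (cont_eval k)

/-- the projections -/
def P (k : ℕ) (f : Hsp) : Hsp := f - (f : ∀ _ : ℕ, ℝ) k • lp.single 2 k (1:ℝ)

lemma P_apply (k : ℕ) (f : Hsp) (j : ℕ) :
    (P k f : ∀ _ : ℕ, ℝ) j = if j = k then 0 else f j := by
  unfold P
  rw [lp.coeFn_sub, Pi.sub_apply, lp.coeFn_smul, Pi.smul_apply]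
  by_cases h : j = k
  · subst h
    rw [lp.single_apply_self, if_pos rfl, smul_eq_mul, mul_one, sub_self]
  · rw [lp.single_apply_ne (E := fun _ : ℕ => ℝ) 2 k (1:ℝ) h, if_neg h, smul_eq_mul, mul_zero, sub_zero]

lemma P_mem (k : ℕ) (f : Hsp) : P k f ∈ C k := by
  rw [mem_C, P_apply, if_pos rfl]

lemma sub_P (k : ℕ) (f : Hsp) : f - P k f = lp.single 2 k ((f : ∀ _ : ℕ, ℝ) k) := by
  apply lp.ext
  funext j
  have h1 : ((f - P k f : Hsp) : ∀ _ : ℕ, ℝ) j = f j - (P k f : ∀ _ : ℕ, ℝ) j := by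
    rw [lp.coeFn_sub]; rfl
  rw [h1, P_apply]
  by_cases h : j = k
  · subst h; rw [if_pos rfl, sub_zero, lp.single_apply_self]
  · rw [if_neg h, sub_self, lp.single_apply_ne (E := fun _ : ℕ => ℝ) 2 k _ h]

lemma norm_sub_P (k : ℕ) (f : Hsp) : ‖f - P k f‖ = |(f : ∀ _ : ℕ, ℝ) k| := by
  rw [sub_P]
  have := lp.norm_single (p := 2) (E := fun _ : ℕ => ℝ) (by norm_num) k ((f : ∀ _ : ℕ, ℝ) k)
  rw [this, Real.norm_eq_abs]

lemma P_nearest (k : ℕ) (f : Hsp) : ∀ y ∈ C k, ‖f - P k f‖ ≤ ‖f - y‖ := by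
  intro y hy
  rw [norm_sub_P]
  have h1 : (f : ∀ _ : ℕ, ℝ) k = ((f - y : Hsp) : ∀ _ : ℕ, ℝ) k := by
    rw [lp.coeFn_sub, Pi.sub_apply, mem_C.mp hy, sub_zero]
  rw [h1, ← Real.norm_eq_abs]
  exact lp.norm_apply_le_norm (by norm_num) (f - y) k

lemma infDist_C (k : ℕ) (f : Hsp) :
    Metric.infDist f (C k) = |(f : ∀ _ : ℕ, ℝ) k| := by
  apply le_antisymm
  · have := Metric.infDist_le_dist_of_mem (x := f) (P_mem k f)
    rwa [dist_eq_norm, norm_sub_P] at this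
  · haveI : Nonempty (C k : Set Hsp) := ⟨⟨0, (C k).zero_mem⟩⟩
    rw [Metric.infDist_eq_iInf]
    refine le_ciInf fun y => ?_
    have h1 : (f : ∀ _ : ℕ, ℝ) k = ((f - (y : Hsp) : Hsp) : ∀ _ : ℕ, ℝ) k := by
      rw [lp.coeFn_sub, Pi.sub_apply, mem_C.mp y.2, sub_zero]
    rw [dist_eq_norm, h1, ← Real.norm_eq_abs]
    exact lp.norm_apply_le_norm (by norm_num) (f - (y : Hsp)) k

end Stmt14
end

open Stmt14

theorem stmt_14 (t : ℕ → ℝ) (ht : ∀ n, t n ∈ Set.Icc (0 : ℝ) 1)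
    (hsum : Summable (fun n => t n ^ 2)) :
    ∃ (H : Type) (_ : NormedAddCommGroup H) (_ : InnerProductSpace ℝ H)
      (_ : CompleteSpace H) (C : ℕ → Submodule ℝ H),
      (∀ k, IsClosed (C k : Set H)) ∧
      (⋂ k, (C k : Set H)) = {0} ∧
      ∃ (P : ℕ → H → H), (∀ k x, P k x ∈ C k) ∧
        (∀ k x, ∀ y ∈ C k, ‖x - P k x‖ ≤ ‖x - y‖) ∧
        ∃ (x₀ : H) (α : ℕ → ℕ) (x : ℕ → H),
          x 0 = x₀ ∧
          (∀ n, x (n + 1) = P (α n) (x n)) ∧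
          (∀ n, t n * (⨆ k, Metric.infDist (x n) (C k)) ≤
            Metric.infDist (x n) (C (α n))) ∧
          0 < atTop.liminf (fun n => ‖x n‖) ∧
          ¬ ∃ φ : ℕ → ℕ, StrictMono φ ∧
            ∀ y : H, Tendsto (fun k => (inner ℝ (x (φ k)) y : ℝ)) atTop (nhds 0) := by
  classical
  set x : ℕ → Hsp := fun n => (⟨Stmt14.c t n, memtwo (hc_sum hsum n)⟩ : Hsp) with hxdef
  have hx : ∀ n k, (x n : ∀ _ : ℕ, ℝ) k = Stmt14.c t n k := fun _ _ => rfl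
  have hx0 : ∀ n, (x n : ∀ _ : ℕ, ℝ) 0 = 1 := by
    intro n
    rw [hx]
    unfold Stmt14.c
    rw [if_neg (by omega)]
    rfl
  refine ⟨Hsp, inferInstance, inferInstance, inferInstance, Stmt14.C, C_closed, ?_,
    Stmt14.P, P_mem, P_nearest, x 0, fun n => n + 1, x, rfl, ?_, ?_, ?_, ?_⟩
  · -- intersection is {0}
    ext f
    simp only [Set.mem_iInter, SetLike.mem_coe, mem_C, Set.mem_singleton_iff]
    constructor
    · intro h
      apply lp.ext
      funext k
      rw [h k, lp.coeFn_zero, Pi.zero_apply]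
    · rintro rfl
      intro k
      rw [lp.coeFn_zero, Pi.zero_apply]
  · -- recursion
    intro n
    apply lp.ext
    funext j
    rw [P_apply]
    show Stmt14.c t (n+1) j = if j = n+1 then 0 else (x n : ∀ _ : ℕ, ℝ) j
    rw [hx]
    unfold Stmt14.c
    by_cases h : j = n+1
    · subst h
      rw [if_pos ⟨by omega, le_refl _⟩, if_pos rfl]
    · rw [if_neg h]
      by_cases h2 : 1 ≤ j ∧ j ≤ n
      · rw [if_pos ⟨h2.1, by omega⟩, if_pos h2]
      · rw [if_neg (by omega), if_neg h2]
  · -- remoteness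
    intro n
    have hsup : (⨆ k, Metric.infDist (x n) (Stmt14.C k)) ≤ 1 := by
      refine ciSup_le fun k => ?_
      rw [infDist_C, hx]
      unfold Stmt14.c
      split_ifs
      · simp
      · exact ha_abs ht k
    have h2 : Metric.infDist (x n) (Stmt14.C (n+1)) = t n := by
      rw [infDist_C, hx]
      unfold Stmt14.c
      rw [if_neg (by omega)]
      show |t n| = t n
      exact abs_of_nonneg (ht n).1
    rw [h2]
    calc t n * (⨆ k, Metric.infDist (x n) (Stmt14.C k)) ≤ t n * 1 :=
          mul_le_mul_of_nonneg_left hsup (ht n).1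
      _ = t n := mul_one _
  · -- liminf positive
    have hp2 : (0:ℝ) < (2:ℝ≥0∞).toReal := by norm_num
    have hub : ∀ n, ‖x n‖ ≤ ‖x 0‖ := by
      intro n
      refine lp.norm_le_of_tsum_le hp2 (norm_nonneg _) ?_
      have h0 : ‖x 0‖ ^ (2:ℝ≥0∞).toReal = ∑' i, ‖(x 0 : ∀ _ : ℕ, ℝ) i‖ ^ (2:ℝ≥0∞).toReal :=
        (lp.hasSum_norm hp2 (x 0)).tsum_eq.symm
      rw [h0]
      refine Summable.tsum_le_tsum (fun i => ?_) ((lp.memℓp (x n)).summable hp2)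
        ((lp.memℓp (x 0)).summable hp2)
      refine Real.rpow_le_rpow (norm_nonneg _) ?_ hp2.le
      rw [hx, hx]
      unfold Stmt14.c
      split_ifs
      all_goals first | (exfalso; omega) | exact le_refl _ | simp
    have hlb : ∀ n, (1:ℝ) ≤ ‖x n‖ := by
      intro n
      have h := lp.norm_apply_le_norm (E := fun _ : ℕ => ℝ) (p := 2) (by norm_num) (x n) 0
      rw [hx0] at h
      simpa using h
    have h1 : (1:ℝ) ≤ atTop.liminf (fun n => ‖x n‖) := by
      refine le_liminf_of_le ?_ (Eventually.of_forall hlb)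
      exact (isBoundedUnder_of ⟨‖x 0‖, hub⟩).isCoboundedUnder_ge
    linarith
  · -- no weak null subsequence
    rintro ⟨φ, hφ, hy⟩
    have h := hy (lp.single 2 0 (1:ℝ))
    have hval : ∀ k, (inner ℝ (x (φ k)) (lp.single 2 0 (1:ℝ)) : ℝ) = 1 := by
      intro k
      rw [lp.inner_single_right]
      rw [RCLike.inner_apply]
      rw [hx0]
      simp
    have h1 : Tendsto (fun _ : ℕ => (1:ℝ)) atTop (nhds 0) := by
      refine h.congr fun k => hval k
    exact one_ne_zero (tendsto_nhds_unique h1 tendsto_const_nhds).symm
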